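/- Kleisli composition of H₀M is monotone in the trajectory argument: for every f : X → H₀M Y and all (d₁,e₁), (d₂,e₂) ∈ H₀M X, if (d₁,e₁) ⊑ (d₂,e₂) then f^†(d₁,e₁) ⊑ f^†(d₂,e₂). -/
import Mathlib


open scoped ENNReal NNReal
open Classical

universe u v w

/-- Raw trajectories: a duration in `ℝ≥0∞` and a partial evolution `ℝ≥0 → Option X`. -/
abbrev Traj (X : Type u) := ℝ≥0∞ × (ℝ≥0 → Option X)

/-- The flattening condition: if the duration is finite, the evolution is constant
from the duration onwards.  Membership in `H₀M X` means exactly `Flat`. -/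
def Flat {X : Type u} (p : Traj X) : Prop :=
  ∀ t : ℝ≥0, p.1 ≤ (t : ℝ≥0∞) → p.2 t = p.2 p.1.toNNReal

/-- The unit of `H₀M`. -/
def eta {X : Type u} (x : X) : Traj X := (0, fun _ => some x)

/-- The Kleisli lifting `f^†` of the monad `H₀M`. -/
noncomputable def kl {X : Type u} {Y : Type v} (f : X → Traj Y) (p : Traj X) : Traj Y :=
  if p.1 = ⊤ then (p.1, fun t => (p.2 t).bind fun x' => (f x').2 0)
  else
    match p.2 p.1.toNNReal with
    | none => (p.1, fun t => (p.2 t).bind fun x' => (f x').2 0)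
    | some x =>
        (p.1 + (f x).1,
          fun t =>
            if (t : ℝ≥0∞) < p.1 then (p.2 t).bind fun x' => (f x').2 0
            else (f x).2 (t - p.1.toNNReal))

/-- Membership in `H₊ X ⊆ H₀M X`: the evolution is not everywhere `none`, and it is
defined at every time instant strictly below the duration. -/
def memHp {X : Type u} (p : Traj X) : Prop :=
  p.2 ≠ (fun _ => none) ∧ ∀ t : ℝ≥0, (t : ℝ≥0∞) < p.1 → p.2 t ≠ none

/-- Membership in `H X ⊆ H₀M X`: either the evolution is total, or the duration is `∞`
and the domain of the evolution is downward closed. -/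
def memH {X : Type u} (p : Traj X) : Prop :=
  (∀ t, p.2 t ≠ none) ∨
    (p.1 = ⊤ ∧ ∀ s t : ℝ≥0, s ≤ t → p.2 t ≠ none → p.2 s ≠ none)

/-- The approximation order `⊑` on `H₀M X`. -/
def TrajLE {X : Type u} (p q : Traj X) : Prop :=
  p.1 ≤ q.1 ∧ (∀ t, p.2 t ≠ none → q.2 t = p.2 t) ∧
    (p.1 ≠ ⊤ → p.2 p.1.toNNReal ≠ none → p.1 = q.1)

/-- Join of an ω-chain in `H₀M X`: the duration is the supremum of the durations, and
the evolution at `t` is the common value `(c i).2 t` whenever it is `≠ none` for some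
`i`, and `none` otherwise. -/
noncomputable def chainJoin {X : Type u} (c : ℕ → Traj X) : Traj X :=
  (⨆ i, (c i).1,
    fun t => if h : ∃ i, (c i).2 t ≠ none then (c h.choose).2 t else none)

/-- `d⋆ = sup { s < d ∣ e is defined on [0, s) }`. -/
noncomputable def dstar {X : Type u} (p : Traj X) : ℝ≥0∞ :=
  sSup {s : ℝ≥0∞ | s < p.1 ∧ ∀ t : ℝ≥0, (t : ℝ≥0∞) < s → p.2 t ≠ none}

/-- The retraction `ρ : H₀M X → H₀M X` onto `H X`. -/
noncomputable def rho {X : Type u} (p : Traj X) : Traj X :=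
  ((if ∀ t, p.2 t ≠ none then p.1 else ⊤),
    fun t =>
      if (t : ℝ≥0∞) ≤ dstar p then p.2 t
      else if ∀ t', p.2 t' ≠ none then p.2 (dstar p).toNNReal else none)

/-- The iterates `f⁽ⁿ⁾` of `f : X → H₀M (Y ⊕ X)`. -/
noncomputable def iter {X Y : Type u} (f : X → Traj (Y ⊕ X)) : ℕ → X → Traj Y
  | 0, _ => (0, fun _ => none)
  | n + 1, x => kl (Sum.elim eta (iter f n)) (f x)

/-- The least-fixpoint iteration `f^‡ x = ⊔ₙ f⁽ⁿ⁾ x`. -/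
noncomputable def iterStar {X Y : Type u} (f : X → Traj (Y ⊕ X)) (x : X) : Traj Y :=
  chainJoin fun n => iter f n x

/-- `f : X → H₊ (A ⊕ B)` is progressive in `B` (guarded in the second summand). -/
def Prog {X : Type u} {A B : Type v} (f : X → Traj (A ⊕ B)) : Prop :=
  ∀ x, ∃ a : A, (f x).2 0 = some (Sum.inl a)

/-- Kleisli composition of `H₀M` is monotone in the trajectory argument. -/
theorem kl_monotone_traj {X : Type u} {Y : Type v} (f : X → Traj Y)
    (hf : ∀ x, Flat (f x)) (p q : Traj X) (hp : Flat p) (hq : Flat q)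
    (hpq : TrajLE p q) :
    TrajLE (kl f p) (kl f q) := by
  obtain ⟨hd, he, hfin⟩ := hpq
  have hbind : ∀ t, (p.2 t).bind (fun x' => (f x').2 0) ≠ none →
      (q.2 t).bind (fun x' => (f x').2 0) = (p.2 t).bind (fun x' => (f x').2 0) := by
    intro t ht
    have hpt : p.2 t ≠ none := by
      intro h; exact ht (by simp [h])
    rw [he t hpt]
  by_cases hp1 : p.1 = ⊤
  · have hq1 : q.1 = ⊤ := top_le_iff.mp (hp1 ▸ hd)
    simp only [kl, hp1, hq1, if_true]
    exact ⟨le_rfl, hbind, fun h => absurd rfl h⟩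
  · rcases hpe : p.2 p.1.toNNReal with _ | x
    · -- p's evolution at duration is none
      have hklp : kl f p = (p.1, fun t => (p.2 t).bind fun x' => (f x').2 0) := by
        unfold kl; rw [if_neg hp1, hpe]
      rw [hklp]
      by_cases hq1 : q.1 = ⊤
      · unfold kl; rw [if_pos hq1]
        exact ⟨hd, hbind, fun _ h => (h (by simp [hpe])).elim⟩
      · rcases hqe : q.2 q.1.toNNReal with _ | x
        · have hklq : kl f q = (q.1, fun t => (q.2 t).bind fun x' => (f x').2 0) := by
            unfold kl; rw [if_neg hq1, hqe]
          rw [hklq]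
          exact ⟨hd, hbind, fun _ h => (h (by simp [hpe])).elim⟩
        · have hklq : kl f q = (q.1 + (f x).1, fun (t : ℝ≥0) =>
              if (t : ℝ≥0∞) < q.1 then (q.2 t).bind fun x' => (f x').2 0
              else (f x).2 (t - q.1.toNNReal)) := by
            unfold kl; rw [if_neg hq1, hqe]
          rw [hklq]
          refine ⟨le_trans hd (le_self_add), ?_, fun _ h => (h (by simp [hpe])).elim⟩
          intro t ht
          have hpt : p.2 t ≠ none := by
            intro h; exact ht (by simp [h])
          have htq : (t : ℝ≥0∞) < q.1 := by
            by_contra hle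
            push_neg at hle
            have : p.1 ≤ (t : ℝ≥0∞) := le_trans hd hle
            have := hp t this
            rw [this, hpe] at hpt
            exact hpt rfl
          simp only [htq, if_pos]
          rw [he t hpt]
    · -- p's evolution at duration is some x
      have heq : p.1 = q.1 := hfin hp1 (by rw [hpe]; exact Option.some_ne_none x)
      have hq1 : q.1 ≠ ⊤ := heq ▸ hp1
      have hqe : q.2 q.1.toNNReal = some x := by
        rw [← heq]
        rw [he p.1.toNNReal (by rw [hpe]; exact Option.some_ne_none x), hpe]
      have hklp : kl f p = (p.1 + (f x).1, fun (t : ℝ≥0) =>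
          if (t : ℝ≥0∞) < p.1 then (p.2 t).bind fun x' => (f x').2 0
          else (f x).2 (t - p.1.toNNReal)) := by
        unfold kl; rw [if_neg hp1, hpe]
      have hklq : kl f q = (q.1 + (f x).1, fun (t : ℝ≥0) =>
          if (t : ℝ≥0∞) < q.1 then (q.2 t).bind fun x' => (f x').2 0
          else (f x).2 (t - q.1.toNNReal)) := by
        unfold kl; rw [if_neg hq1, hqe]
      rw [hklp, hklq, ← heq]
      refine ⟨le_rfl, ?_, fun _ _ => rfl⟩
      intro t ht
      by_cases htq : (t : ℝ≥0∞) < p.1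
      · simp only [htq, if_pos] at ht ⊢
        exact hbind t ht
      · simp only [htq, if_neg, if_false]
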